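/- Let ρ be a positive semidefinite complex n × n matrix with 0 < Tr ρ ≤ 1, let τ be a positive semidefinite n × n matrix with trace 1, let λ ∈ (0, 1], and let 0 ≤ w₁ ≤ w₂ ≤ 1. With N_w(ρ) = ρ / (Tr ρ)^{1−w} and Δ_λ(X) = (1−λ)X + λ·I/n, we have −Tr(τ · log Δ_λ(N_{w₁}(ρ))) ≤ −Tr(τ · log Δ_λ(N_{w₂}(ρ))), where log denotes the matrix logarithm obtained by applying the real logarithm to the eigenvalues in a spectral decomposition of the (positive definite) Hermitian argument. Hence the cross-entropy loss L_w is monotone nondecreasing in the hyperparameter w. -/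

import Mathlib

open Matrix ComplexOrder

/-- Matrix logarithm of a Hermitian matrix, obtained by applying the real logarithm to the
eigenvalues in a spectral decomposition (and `0` on non-Hermitian input). -/
noncomputable def matLog {n : Type*} [Fintype n] [DecidableEq n]
    (H : Matrix n n ℂ) : Matrix n n ℂ :=
  if hH : H.IsHermitian then
    (hH.eigenvectorUnitary : Matrix n n ℂ) *
      Matrix.diagonal (fun i => (Real.log (hH.eigenvalues i) : ℂ)) *
      star (hH.eigenvectorUnitary : Matrix n n ℂ)
  else 0

/-- The depolarizing channel `Δ_λ(ρ) = (1 - λ) ρ + λ I / n` on `n × n` complex matrices. -/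
noncomputable def depol {n : Type*} [Fintype n] [DecidableEq n]
    (l : ℝ) (ρ : Matrix n n ℂ) : Matrix n n ℂ :=
  ((1 - l : ℝ) : ℂ) • ρ + ((l / (Fintype.card n) : ℝ) : ℂ) • (1 : Matrix n n ℂ)

/-- Partial normalization `N_w(ρ) = ρ / (Tr ρ)^(1-w)` (the trace of a positive semidefinite
matrix is real, taken via the real part; the power is the real power). -/
noncomputable def normWeight {n : Type*} [Fintype n]
    (w : ℝ) (ρ : Matrix n n ℂ) : Matrix n n ℂ :=
  (ρ.trace.re ^ (1 - w))⁻¹ • ρ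

lemma matLog_eq_cfc {n : Type*} [Fintype n] [DecidableEq n]
    {H : Matrix n n ℂ} (hH : H.IsHermitian) : matLog H = cfc Real.log H := by
  rw [matLog, dif_pos hH, hH.cfc_eq, Matrix.IsHermitian.cfc]
  rfl

lemma smul_add_smul_one_eq_cfc {m : Type*} [Fintype m] [DecidableEq m]
    {ρ : Matrix m m ℂ} (hρ : ρ.IsHermitian) (a b : ℝ) :
    (a : ℂ) • ρ + (b : ℂ) • (1 : Matrix m m ℂ) = cfc (fun x : ℝ => a * x + b) ρ := by
  rw [hρ.cfc_eq, Matrix.IsHermitian.cfc, Unitary.conjStarAlgAut_apply]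
  set U : Matrix m m ℂ := (hρ.eigenvectorUnitary : Matrix m m ℂ) with hU
  have hUU : U * star U = 1 := Unitary.mul_star_self_of_mem hρ.eigenvectorUnitary.2
  conv_lhs => rw [hρ.spectral_theorem, Unitary.conjStarAlgAut_apply]
  rw [← hU]
  have h1 : ((b : ℂ)) • (1 : Matrix m m ℂ) = U * ((b : ℂ) • 1) * star U := by
    rw [Matrix.mul_smul, Matrix.smul_mul, mul_one, hUU]
  rw [h1, ← Matrix.smul_mul, ← Matrix.mul_smul, ← Matrix.add_mul, ← Matrix.mul_add]
  congr 1
  congr 1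
  rw [← Matrix.diagonal_smul, ← Matrix.diagonal_one, ← Matrix.diagonal_smul,
    Matrix.diagonal_add, Matrix.diagonal_eq_diagonal_iff]
  intro i
  simp [Function.comp, mul_comm]

lemma matLog_smul_add {m : Type*} [Fintype m] [DecidableEq m]
    {ρ : Matrix m m ℂ} (hρ : ρ.IsHermitian) (a b : ℝ) :
    matLog ((a : ℂ) • ρ + (b : ℂ) • (1 : Matrix m m ℂ)) =
      (hρ.eigenvectorUnitary : Matrix m m ℂ) *
        Matrix.diagonal (fun i => (Real.log (a * hρ.eigenvalues i + b) : ℂ)) *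
        star (hρ.eigenvectorUnitary : Matrix m m ℂ) := by
  have hfin : (spectrum ℝ ρ).Finite := Matrix.finite_real_spectrum
  have hA := smul_add_smul_one_eq_cfc hρ a b
  have hsa : ((a : ℂ) • ρ + (b : ℂ) • (1 : Matrix m m ℂ)).IsHermitian := by
    rw [hA]; exact cfc_predicate _ ρ
  have hcomp := cfc_comp Real.log (fun x : ℝ => a * x + b) ρ hρ
    ((hfin.image _).continuousOn _) (hfin.continuousOn _)
  rw [matLog_eq_cfc hsa, hA, ← hcomp, hρ.cfc_eq, Matrix.IsHermitian.cfc]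
  rfl

lemma real_smul_matrix {m : Type*} [Fintype m] (r : ℝ) (M : Matrix m m ℂ) :
    r • M = (r : ℂ) • M := by
  ext i j
  simp [Complex.real_smul]

lemma trace_re_nonneg_of_posSemidef {m : Type*} [Fintype m] [DecidableEq m]
    {M : Matrix m m ℂ} (hM : M.PosSemidef) : 0 ≤ M.trace.re := by
  rw [Matrix.trace, Complex.re_sum]
  refine Finset.sum_nonneg fun i _ => ?_
  have h := hM.re_dotProduct_nonneg (Pi.single i 1)
  simpa [dotProduct, Matrix.mulVec, Pi.single_apply, Finset.sum_ite_eq,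
    Matrix.diag] using h

lemma trace_mul_re_nonneg {m : Type*} [Fintype m] [DecidableEq m]
    {τ P : Matrix m m ℂ} (hτ : τ.PosSemidef) (hP : P.PosSemidef) :
    0 ≤ (τ * P).trace.re := by
  obtain ⟨B, rfl⟩ := by open MatrixOrder in exact CStarAlgebra.nonneg_iff_eq_star_mul_self.mp hP.nonneg
  rw [← mul_assoc, Matrix.trace_mul_comm, ← mul_assoc]
  exact trace_re_nonneg_of_posSemidef (hτ.mul_mul_conjTranspose_same B)


theorem crossEntropyLoss_monotone_weight
    {n : ℕ} (hn : 0 < n)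
    (ρ τ : Matrix (Fin n) (Fin n) ℂ)
    (hρ : ρ.PosSemidef) (htr0 : 0 < ρ.trace.re) (htr1 : ρ.trace.re ≤ 1)
    (hτ : τ.PosSemidef) (hτtr : τ.trace = 1)
    (l : ℝ) (hl0 : 0 < l) (hl1 : l ≤ 1)
    (w₁ w₂ : ℝ) (hw₁ : 0 ≤ w₁) (hw : w₁ ≤ w₂) (hw₂ : w₂ ≤ 1) :
    -(τ * matLog (depol l (normWeight w₁ ρ))).trace.re ≤
      -(τ * matLog (depol l (normWeight w₂ ρ))).trace.re := by
  set t := ρ.trace.re with ht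
  set c : ℝ → ℝ := fun w => (t ^ (1 - w))⁻¹ with hc
  set a : ℝ → ℝ := fun w => (1 - l) * c w with ha
  set b : ℝ := l / (Fintype.card (Fin n)) with hb
  have hb0 : 0 < b := by
    rw [hb, Fintype.card_fin]
    positivity
  -- rewrite depol ∘ normWeight as a • ρ + b • 1
  have hd : ∀ w, depol l (normWeight w ρ) = (a w : ℂ) • ρ + (b : ℂ) • 1 := by
    intro w
    rw [normWeight, depol, real_smul_matrix, smul_smul, ← Complex.ofReal_mul]
  -- scalar inequalities
  have hcpos : ∀ w, 0 < c w := fun w => by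
    rw [hc]; exact inv_pos.mpr (Real.rpow_pos_of_pos htr0 _)
  have hale : a w₂ ≤ a w₁ := by
    rw [ha]
    apply mul_le_mul_of_nonneg_left _ (by linarith)
    rw [hc]
    exact inv_anti₀ (Real.rpow_pos_of_pos htr0 _)
      (Real.rpow_le_rpow_of_exponent_ge htr0 htr1 (by linarith))
  have ha2 : 0 ≤ a w₂ := by
    rw [ha]
    exact mul_nonneg (by linarith) (hcpos w₂).le
  -- matLog formulas
  set U : Matrix (Fin n) (Fin n) ℂ := (hρ.1.eigenvectorUnitary : Matrix (Fin n) (Fin n) ℂ)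
  set μ : Fin n → ℝ := hρ.1.eigenvalues
  have hlog : ∀ w, matLog (depol l (normWeight w ρ)) =
      U * Matrix.diagonal (fun i => (Real.log (a w * μ i + b) : ℂ)) * star U := by
    intro w
    rw [hd w, matLog_smul_add hρ.1]
  -- the difference is PSD
  have hdiff : matLog (depol l (normWeight w₁ ρ)) - matLog (depol l (normWeight w₂ ρ)) =
      U * Matrix.diagonal
        (fun i => ((Real.log (a w₁ * μ i + b) - Real.log (a w₂ * μ i + b) : ℝ) : ℂ)) * star U := by
    rw [hlog w₁, hlog w₂, ← Matrix.sub_mul, ← Matrix.mul_sub, Matrix.diagonal_sub]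
    push_cast
    rfl
  have hPSD : (matLog (depol l (normWeight w₁ ρ)) -
      matLog (depol l (normWeight w₂ ρ))).PosSemidef := by
    rw [hdiff, Matrix.star_eq_conjTranspose]
    apply Matrix.PosSemidef.mul_mul_conjTranspose_same
    rw [Matrix.posSemidef_diagonal_iff]
    intro i
    rw [Complex.zero_le_real, sub_nonneg]
    have hμ : 0 ≤ μ i := hρ.eigenvalues_nonneg i
    have h2 : 0 < a w₂ * μ i + b := by positivity
    exact Real.log_le_log h2 (by nlinarith)
  have := trace_mul_re_nonneg hτ hPSD
  rw [Matrix.mul_sub, Matrix.trace_sub, Complex.sub_re] at this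
  linarith
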